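/- For 0 ≤ i ≤ n, the dual Bernstein polynomial admits the power-basis representation D^n_i(x; α, β) = A^{(α,β)}_{ni} · ((α+1)_n / (n+1)!) · Σ_{j=0}^{n} B^{(α,β)}_{nj} F(i,j) (1-x)^j, where A^{(α,β)}_{ni} = (-1)^{n-i} (n+1)(σ+1)_n / (K (α+1)_{n-i} (β+1)_i), B^{(α,β)}_{nj} = (-n)_j (n+σ+1)_j / (j! (α+1)_j), and F(i,j) = ₃F₂(j-n, -i, 1; -n, -n-α; 1). -/

import Mathlib

open scoped BigOperators
open MeasureTheory Polynomial

/-- Pochhammer symbol `(c)_l = c (c+1) ⋯ (c+l-1)`. -/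
noncomputable def poch (c : ℝ) (l : ℕ) : ℝ := ∏ j ∈ Finset.range l, (c + j)

/-- Shifted Jacobi polynomial `R_k^{(α,β)}(x)`. -/
noncomputable def jacobiR (α β : ℝ) (k : ℕ) (x : ℝ) : ℝ :=
  poch (α + 1) k / (Nat.factorial k) *
    ∑ l ∈ Finset.range (k + 1),
      poch (-(k : ℝ)) l * poch ((k : ℝ) + α + β + 1) l /
        (poch (α + 1) l * (Nat.factorial l)) * (1 - x) ^ l

/-- Hahn polynomial `Q_k(x; α, β; N)`. -/
noncomputable def hahnQ (α β : ℝ) (N k : ℕ) (x : ℝ) : ℝ :=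
  ∑ l ∈ Finset.range (k + 1),
    poch (-(k : ℝ)) l * poch ((k : ℝ) + α + β + 1) l * poch (-x) l /
      (poch (α + 1) l * poch (-(N : ℝ)) l * (Nat.factorial l))

/-- Bernstein basis polynomial `B^n_i(x)` as a real function. -/
noncomputable def bern (n i : ℕ) (x : ℝ) : ℝ :=
  (n.choose i : ℝ) * x ^ i * (1 - x) ^ (n - i)

/-- `D 0, …, D n` are the dual Bernstein polynomials of degree `n` with
parameters `α, β`: they have degree at most `n` and are biorthogonal to the
Bernstein basis w.r.t. the weight `(1-x)^α x^β` on `[0,1]`. -/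
def IsDualBernstein (n : ℕ) (α β : ℝ) (D : ℕ → Polynomial ℝ) : Prop :=
  (∀ j, j ≤ n → (D j).natDegree ≤ n) ∧
  ∀ i, i ≤ n → ∀ j, j ≤ n →
    (∫ x in (0:ℝ)..1, (1 - x) ^ α * x ^ β * bern n i x * (D j).eval x)
      = if i = j then (1:ℝ) else 0

/-- The terminating hypergeometric sum `F(i,j) = ₃F₂(j-n, -i, 1; -n, -n-α; 1)`. -/
noncomputable def hyperF (α : ℝ) (n i j : ℕ) : ℝ :=
  ∑ l ∈ Finset.range (min (n - j) i + 1),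
    poch ((j:ℝ) - n) l * poch (-(i:ℝ)) l * (Nat.factorial l) /
      (poch (-(n:ℝ)) l * poch (-(n:ℝ) - α) l * (Nat.factorial l))

lemma poch_zero (c : ℝ) : poch c 0 = 1 := by simp [poch]

lemma poch_succ (c : ℝ) (k : ℕ) : poch c (k+1) = poch c k * (c + k) := by
  simp [poch, Finset.prod_range_succ]

lemma poch_add (c : ℝ) (a b : ℕ) : poch c (a+b) = poch c a * poch (c+a) b := by
  induction b with
  | zero => simp [poch_zero]
  | succ b ih =>
      rw [← Nat.add_assoc, poch_succ, ih, poch_succ]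
      push_cast; ring

lemma poch_pos {c : ℝ} (hc : 0 < c) (k : ℕ) : 0 < poch c k := by
  apply Finset.prod_pos
  intro j _
  positivity

lemma poch_neg_nat (N k : ℕ) : poch (-(N:ℝ)) k = (-1)^k * (N.descFactorial k : ℝ) := by
  induction k with
  | zero => simp [poch_zero]
  | succ k ih =>
      rw [poch_succ, ih, Nat.descFactorial_succ]
      rcases Nat.lt_or_ge N k with h | h
      · rw [Nat.descFactorial_eq_zero_iff_lt.2 h]
        simp
      · have hk : (((N - k : ℕ)) : ℝ) = (N:ℝ) - k := by push_cast [h]; ring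
        push_cast [hk]; ring

lemma poch_neg_nat_eq_zero {N k : ℕ} (h : N < k) : poch (-(N:ℝ)) k = 0 := by
  rw [poch_neg_nat, Nat.descFactorial_eq_zero_iff_lt.2 h]; simp

lemma poch_neg_nat_ne_zero {N k : ℕ} (h : k ≤ N) : poch (-(N:ℝ)) k ≠ 0 := by
  rw [poch_neg_nat]
  have h2 : (0:ℝ) < (N.descFactorial k : ℝ) := by
    have : N.descFactorial k ≠ 0 := by
      simp [Nat.descFactorial_eq_zero_iff_lt]; omega
    positivity
  positivity

lemma poch_reflect (c : ℝ) (k : ℕ) : poch c k = (-1)^k * poch (1 - c - k) k := by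
  rw [poch, poch, ← Finset.prod_range_reflect]
  have : ∀ j ∈ Finset.range k, (c + ((k - 1 - j : ℕ):ℝ)) = (-1) * (1 - c - k + j) := by
    intro j hj
    simp only [Finset.mem_range] at hj
    have h1 : j ≤ k - 1 := by omega
    have h2 : (1:ℕ) ≤ k := by omega
    have : ((k - 1 - j : ℕ) : ℝ) = (k:ℝ) - 1 - j := by push_cast [h1, h2]; ring
    rw [this]; ring
  rw [Finset.prod_congr rfl this, Finset.prod_mul_distrib]
  simp

lemma desc_mul (n j l : ℕ) :
    n.descFactorial j * (n - j).descFactorial l = n.descFactorial (j + l) := by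
  induction l with
  | zero => simp
  | succ l ih =>
      rw [Nat.descFactorial_succ, ← Nat.add_assoc, Nat.descFactorial_succ, ← ih]
      have : n - j - l = n - (j + l) := by omega
      rw [this]; ring

/-- Vandermonde convolution for rising factorials. -/
lemma poch_vandermonde (x y : ℝ) (N : ℕ) :
    poch (x+y) N = ∑ j ∈ Finset.range (N+1), (N.choose j : ℝ) * poch x j * poch y (N-j) := by
  induction N with
  | zero => simp [poch_zero]
  | succ N ih =>
      rw [poch_succ, ih, Finset.sum_mul]
      have hterm : ∀ j ∈ Finset.range (N+1),
          (N.choose j : ℝ) * poch x j * poch y (N-j) * (x + y + N)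
          = (N.choose j : ℝ) * poch x (j+1) * poch y (N-j)
            + (N.choose j : ℝ) * poch x j * poch y ((N-j)+1) := by
        intro j hj
        simp only [Finset.mem_range] at hj
        rw [poch_succ, poch_succ]
        have : ((N - j : ℕ) : ℝ) = (N:ℝ) - j := by
          have : j ≤ N := by omega
          push_cast [this]; ring
        rw [this]; ring
      rw [Finset.sum_congr rfl hterm, Finset.sum_add_distrib]
      -- second sum equals poch y (N+1) + Σ_{j∈range(N+1)} C(N,j+1) x_{j+1} y_{N-j}
      have h2 : ∑ j ∈ Finset.range (N+1), (N.choose j : ℝ) * poch x j * poch y ((N-j)+1)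
          = poch y (N+1) + ∑ j ∈ Finset.range (N+1),
              (N.choose (j+1) : ℝ) * poch x (j+1) * poch y (N-j) := by
        rw [Finset.sum_range_succ' (fun j => (N.choose j : ℝ) * poch x j * poch y ((N-j)+1)) N]
        simp only [Nat.choose_zero_right, Nat.cast_one, poch_zero, Nat.sub_zero, one_mul, mul_one]
        rw [add_comm]
        congr 1
        rw [Finset.sum_range_succ]
        simp only [Nat.choose_succ_self, Nat.cast_zero, zero_mul, add_zero]
        apply Finset.sum_congr rfl
        intro j hj
        simp only [Finset.mem_range] at hj
        have : N - (j+1) + 1 = N - j := by omega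
        rw [this]
      rw [h2]
      -- RHS
      rw [Finset.sum_range_succ' (fun j => ((N+1).choose j : ℝ) * poch x j * poch y (N+1-j)) (N+1)]
      simp only [Nat.choose_zero_right, Nat.cast_one, poch_zero, Nat.sub_zero, one_mul, mul_one]
      have h3 : ∀ j ∈ Finset.range (N+1),
          ((N+1).choose (j+1) : ℝ) * poch x (j+1) * poch y (N+1-(j+1))
          = (N.choose j : ℝ) * poch x (j+1) * poch y (N-j)
            + (N.choose (j+1) : ℝ) * poch x (j+1) * poch y (N-j) := by
        intro j hj
        have h4 : N+1-(j+1) = N - j := by omega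
        rw [h4, Nat.choose_succ_succ]
        push_cast; ring
      rw [Finset.sum_congr rfl h3, Finset.sum_add_distrib]
      ring

lemma poch_base_congr {c d : ℝ} (h : c = d) (k : ℕ) : poch c k = poch d k := by rw [h]

lemma cv_poly (b c : ℝ) (N : ℕ) :
    ∑ j ∈ Finset.range (N+1), (-1)^j * (N.choose j : ℝ) * poch b j * poch (c+j) (N-j)
      = poch (c-b) N := by
  have h1 : ∀ j ∈ Finset.range (N+1),
      (-1)^j * (N.choose j : ℝ) * poch b j * poch (c+j) (N-j)
      = (-1)^N * ((N.choose j : ℝ) * poch b j * poch (1-c-N) (N-j)) := by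
    intro j hj
    simp only [Finset.mem_range] at hj
    have hj' : j ≤ N := by omega
    rw [poch_reflect (c+j) (N-j)]
    have hb : 1 - (c+j) - ((N-j:ℕ):ℝ) = 1 - c - N := by push_cast [hj']; ring
    rw [poch_base_congr hb]
    have : (-1:ℝ)^(N-j) * (-1)^j = (-1)^N := by
      rw [← pow_add]; congr 1; omega
    calc (-1:ℝ)^j * (N.choose j : ℝ) * poch b j * ((-1)^(N-j) * poch (1-c-N) (N-j))
        = ((-1:ℝ)^(N-j) * (-1)^j) * ((N.choose j : ℝ) * poch b j * poch (1-c-N) (N-j)) := by ring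
      _ = _ := by rw [this]
  rw [Finset.sum_congr rfl h1, ← Finset.mul_sum, ← poch_vandermonde]
  rw [poch_reflect (c-b) N]
  congr 1
  apply poch_base_congr; ring

lemma cv_div {c : ℝ} (hc : 0 < c) (b : ℝ) (N : ℕ) :
    ∑ j ∈ Finset.range (N+1), poch (-(N:ℝ)) j * poch b j / ((Nat.factorial j : ℝ) * poch c j)
      = poch (c-b) N / poch c N := by
  have hcN : poch c N ≠ 0 := (poch_pos hc N).ne'
  rw [eq_div_iff hcN, Finset.sum_mul]
  rw [← cv_poly b c N]
  apply Finset.sum_congr rfl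
  intro j hj
  simp only [Finset.mem_range] at hj
  have hj' : j ≤ N := by omega
  have hsplit : poch c N = poch c j * poch (c+j) (N-j) := by
    have : N = j + (N-j) := by omega
    rw [this, poch_add]
    congr 2
    omega
  rw [hsplit, poch_neg_nat, Nat.descFactorial_eq_factorial_mul_choose]
  have hcj : poch c j ≠ 0 := (poch_pos hc j).ne'
  have hfj : (Nat.factorial j : ℝ) ≠ 0 := by positivity
  field_simp
  push_cast; ring

lemma Gamma_add_nat {c : ℝ} (hc : 0 < c) (k : ℕ) :
    Real.Gamma (c + k) = Real.Gamma c * poch c k := by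
  induction k with
  | zero => simp [poch_zero]
  | succ k ih =>
      have h1 : c + ((k+1 : ℕ):ℝ) = (c + k) + 1 := by push_cast; ring
      rw [h1, Real.Gamma_add_one (by positivity), ih, poch_succ]
      ring

lemma betaIntegrable {p q : ℝ} (hp : -1 < p) (hq : -1 < q) :
    IntervalIntegrable (fun x : ℝ => x ^ p * (1-x) ^ q) volume 0 1 := by
  have h := Complex.betaIntegral_convergent (u := ((p+1 : ℝ) : ℂ)) (v := ((q+1 : ℝ) : ℂ))
    (by simp; linarith) (by simp; linarith)
  rw [intervalIntegrable_iff] at h ⊢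
  have h2 := h.re
  apply MeasureTheory.IntegrableOn.congr_fun h2 _ measurableSet_uIoc
  intro x hx
  rw [Set.uIoc_of_le (by norm_num : (0:ℝ) ≤ 1)] at hx
  obtain ⟨hx0, hx1⟩ := hx
  have e1 : ((p+1 : ℝ) : ℂ) - 1 = ((p : ℝ) : ℂ) := by push_cast; ring
  have e2 : ((q+1 : ℝ) : ℂ) - 1 = ((q : ℝ) : ℂ) := by push_cast; ring
  have e3 : (1 : ℂ) - (x:ℂ) = ((1 - x : ℝ):ℂ) := by push_cast; ring
  simp only [e1, e2, e3]
  rw [← Complex.ofReal_cpow hx0.le, ← Complex.ofReal_cpow (by linarith : (0:ℝ) ≤ 1 - x)]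
  simp [Complex.ofReal_mul]

lemma betaEval {p q : ℝ} (hp : 0 < p) (hq : 0 < q) :
    ∫ x in (0:ℝ)..1, x ^ (p-1) * (1-x) ^ (q-1)
      = Real.Gamma p * Real.Gamma q / Real.Gamma (p+q) := by
  have h := Complex.Gamma_mul_Gamma_eq_betaIntegral (s := ((p:ℝ):ℂ)) (t := ((q:ℝ):ℂ))
    (by simpa using hp) (by simpa using hq)
  have hbeta : Complex.betaIntegral ((p:ℝ):ℂ) ((q:ℝ):ℂ)
      = ((∫ x in (0:ℝ)..1, x ^ (p-1) * (1-x) ^ (q-1) : ℝ) : ℂ) := by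
    rw [Complex.betaIntegral]
    rw [← intervalIntegral.integral_ofReal]
    apply intervalIntegral.integral_congr
    intro x hx
    rw [Set.uIcc_of_le (by norm_num : (0:ℝ) ≤ 1)] at hx
    obtain ⟨hx0, hx1⟩ := hx
    have e1 : ((p : ℝ) : ℂ) - 1 = ((p - 1 : ℝ) : ℂ) := by push_cast; ring
    have e2 : ((q : ℝ) : ℂ) - 1 = ((q - 1 : ℝ) : ℂ) := by push_cast; ring
    have e3 : (1 : ℂ) - (x:ℂ) = ((1 - x : ℝ):ℂ) := by push_cast; ring
    simp only [e1, e2, e3]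
    rw [← Complex.ofReal_cpow hx0, ← Complex.ofReal_cpow (by linarith : (0:ℝ) ≤ 1 - x)]
    simp [Complex.ofReal_mul]
  rw [hbeta, ← Complex.ofReal_add, Complex.Gamma_ofReal, Complex.Gamma_ofReal,
    Complex.Gamma_ofReal, ← Complex.ofReal_mul, ← Complex.ofReal_mul] at h
  have h2 := Complex.ofReal_injective h
  have hne : Real.Gamma (p+q) ≠ 0 := (Real.Gamma_pos_of_pos (by linarith)).ne'
  field_simp
  linarith [h2]

lemma ae_ne_one : ∀ᵐ (x:ℝ) ∂volume, x ≠ (1:ℝ) := by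
  rw [MeasureTheory.ae_iff]
  have : {x : ℝ | ¬ x ≠ 1} = {(1:ℝ)} := by ext x; simp
  rw [this]
  simp

lemma intW {α β : ℝ} (hα : α > -1) (hβ : β > -1) :
    IntervalIntegrable (fun x : ℝ => (1-x) ^ α * x ^ β) volume 0 1 := by
  have := betaIntegrable hβ hα
  simpa [mul_comm] using this

lemma intWg {α β : ℝ} (hα : α > -1) (hβ : β > -1) {g : ℝ → ℝ}
    (hg : ContinuousOn g (Set.uIcc 0 1)) :
    IntervalIntegrable (fun x : ℝ => (1-x) ^ α * x ^ β * g x) volume 0 1 :=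
  (intW hα hβ).mul_continuousOn hg

/-- Core integral: weight times Bernstein times (1-x)^s. -/
lemma coreInt {α β : ℝ} (hα : α > -1) (hβ : β > -1) {n i : ℕ} (hi : i ≤ n) (s : ℕ) :
    ∫ x in (0:ℝ)..1, (1-x) ^ α * x ^ β * bern n i x * (1-x)^s
      = (n.choose i : ℝ) * (Real.Gamma (β+i+1) * Real.Gamma (α+(n-i:ℕ)+s+1)
          / Real.Gamma ((β+i+1) + (α+(n-i:ℕ)+s+1))) := by
  have key : ∫ x in (0:ℝ)..1, (1-x) ^ α * x ^ β * bern n i x * (1-x)^s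
      = (n.choose i : ℝ) * ∫ x in (0:ℝ)..1, x ^ ((β+i+1)-1) * (1-x) ^ ((α+(n-i:ℕ)+s+1)-1) := by
    rw [← intervalIntegral.integral_const_mul]
    apply intervalIntegral.integral_congr_ae
    filter_upwards [ae_ne_one] with x hx1 hmem
    rw [Set.uIoc_of_le (by norm_num : (0:ℝ) ≤ 1)] at hmem
    have hx0 : 0 < x := hmem.1
    have hx1' : x < 1 := lt_of_le_of_ne hmem.2 hx1
    have h1x : 0 < 1 - x := by linarith
    have e1 : x ^ (β + (i:ℝ) + 1 - 1) = x ^ β * x ^ (i:ℕ) := by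
      rw [show β + (i:ℝ) + 1 - 1 = β + (i:ℝ) by ring, Real.rpow_add hx0, Real.rpow_natCast]
    have e2 : (1-x) ^ (α + ((n-i:ℕ):ℝ) + (s:ℝ) + 1 - 1)
        = (1-x) ^ α * (1-x) ^ (n-i:ℕ) * (1-x) ^ (s:ℕ) := by
      rw [show α + ((n-i:ℕ):ℝ) + (s:ℝ) + 1 - 1 = (α + ((n-i:ℕ):ℝ)) + (s:ℝ) by ring,
        Real.rpow_add h1x, Real.rpow_add h1x, Real.rpow_natCast, Real.rpow_natCast]
    rw [bern, e1, e2]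
    ring
  have hp : (0:ℝ) < β + i + 1 := by
    have : (0:ℝ) ≤ (i:ℕ) := Nat.cast_nonneg i
    linarith
  have hq : (0:ℝ) < α + ((n-i:ℕ):ℝ) + s + 1 := by
    have h1 : (0:ℝ) ≤ ((n-i:ℕ):ℝ) := Nat.cast_nonneg _
    have h2 : (0:ℝ) ≤ (s:ℝ) := Nat.cast_nonneg s
    linarith
  rw [key, betaEval hp hq]

section core
variable {α : ℝ} {n : ℕ}

/-- L1: hyperF as a sum over the full range. -/
lemma hyperF_ext (α : ℝ) {n m j : ℕ} (hm : m ≤ n) (hj : j ≤ n) :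
    hyperF α n m j = ∑ l ∈ Finset.range (n+1),
      poch ((j:ℝ) - n) l * poch (-(m:ℝ)) l / (poch (-(n:ℝ)) l * poch (-(n:ℝ) - α) l) := by
  rw [hyperF]
  have hsub : Finset.range (min (n-j) m + 1) ⊆ Finset.range (n+1) := by
    apply Finset.range_subset_range.2
    omega
  rw [Finset.sum_subset hsub]
  · apply Finset.sum_congr rfl
    intro l _
    have hf : ((Nat.factorial l : ℝ)) ≠ 0 := by positivity
    rw [mul_div_mul_right _ _ hf]
  · intro l hl1 hl2
    simp only [Finset.mem_range] at hl1 hl2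
    have : n - j < l ∨ m < l := by omega
    rcases this with h | h
    · have he : (j:ℝ) - n = -(((n-j:ℕ)):ℝ) := by
        push_cast [hj]; ring
      rw [he, poch_neg_nat_eq_zero h]
      simp
    · rw [poch_neg_nat_eq_zero h]
      simp

/-- L2: key product identity. -/
lemma key_swap {j l : ℕ} (hj : j ≤ n) (hl : l ≤ n) :
    poch (-(n:ℝ)) j * poch ((j:ℝ) - n) l
      = (-1)^l * (n.descFactorial l : ℝ) * poch (-(((n-l:ℕ)):ℝ)) j := by
  have he : (j:ℝ) - n = -(((n-j:ℕ)):ℝ) := by push_cast [hj]; ring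
  rw [he, poch_neg_nat, poch_neg_nat, poch_neg_nat]
  have hnat : n.descFactorial j * (n-j).descFactorial l
      = n.descFactorial l * (n-l).descFactorial j := by
    rw [desc_mul, desc_mul, Nat.add_comm]
  have : (n.descFactorial j : ℝ) * ((n-j).descFactorial l : ℝ)
      = (n.descFactorial l : ℝ) * ((n-l).descFactorial j : ℝ) := by
    exact_mod_cast congrArg (Nat.cast (R := ℝ)) hnat
  calc (-1:ℝ)^j * n.descFactorial j * ((-1)^l * (n-j).descFactorial l)
      = (-1:ℝ)^l * (-1)^j * ((n.descFactorial j : ℝ) * (n-j).descFactorial l) := by ring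
    _ = (-1:ℝ)^l * (-1)^j * ((n.descFactorial l : ℝ) * (n-l).descFactorial j) := by rw [this]
    _ = _ := by ring

/-- alternating sum of binomials, real version. -/
lemma alt_sum_choose {M K : ℕ} (h : M ≤ K) :
    ∑ k ∈ Finset.range (K+1), (-1:ℝ)^k * (M.choose k : ℝ)
      = if M = 0 then 1 else 0 := by
  have hsub : Finset.range (M+1) ⊆ Finset.range (K+1) := Finset.range_subset_range.2 (by omega)
  rw [← Finset.sum_subset hsub]
  · have := Int.alternating_sum_range_choose (n := M)
    have h2 := congrArg (fun z : ℤ => (z : ℝ)) this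
    push_cast at h2
    rw [← h2]
  · intro k hk1 hk2
    simp only [Finset.mem_range] at hk1 hk2
    rw [Nat.choose_eq_zero_of_lt (by omega)]
    simp

/-- L4: the T sum. -/
lemma T_sum {i m : ℕ} (hi : i ≤ n) (hm : m ≤ n) :
    ∑ l ∈ Finset.range (n+1), poch (-(m:ℝ)) l * (((n-i).descFactorial (n-l) : ℕ) : ℝ)
      = if i = m then ((-1:ℝ)^i * (Nat.factorial i : ℝ) * (Nat.factorial (n-i) : ℝ)) else 0 := by
  have hzero : ∀ l ∈ Finset.range (n+1), l < i →
      poch (-(m:ℝ)) l * (((n-i).descFactorial (n-l) : ℕ) : ℝ) = 0 := by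
    intro l _ hl
    have : (n-i) < (n-l) := by omega
    rw [Nat.descFactorial_eq_zero_iff_lt.2 this]
    simp
  rcases Nat.lt_or_ge m i with hmi | him
  · -- m < i : everything vanishes
    rw [if_neg (by omega)]
    apply Finset.sum_eq_zero
    intro l hl
    rcases Nat.lt_or_ge l i with h | h
    · exact hzero l hl h
    · rw [poch_neg_nat_eq_zero (by omega : m < l)]; simp
  · -- i ≤ m
    have hIco : ∑ l ∈ Finset.range (n+1), poch (-(m:ℝ)) l * (((n-i).descFactorial (n-l) : ℕ) : ℝ)
        = ∑ l ∈ Finset.Ico i (n+1), poch (-(m:ℝ)) l * (((n-i).descFactorial (n-l) : ℕ) : ℝ) := by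
      rw [Finset.range_eq_Ico]
      rw [← Finset.sum_subset (Finset.Ico_subset_Ico (Nat.zero_le i) (le_refl (n+1)))]
      intro l hl1 hl2
      simp only [Finset.mem_Ico] at hl1 hl2
      exact hzero l (by simp [Finset.mem_range]; omega) (by omega)
    rw [hIco, Finset.sum_Ico_eq_sum_range]
    have hrange : n + 1 - i = (n-i) + 1 := by omega
    rw [hrange]
    have hterm : ∀ k ∈ Finset.range ((n-i)+1),
        poch (-(m:ℝ)) (i+k) * (((n-i).descFactorial (n-(i+k)) : ℕ) : ℝ)
        = ((-1:ℝ)^i * (m.descFactorial i : ℝ) * ((n-i).factorial : ℝ))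
            * ((-1:ℝ)^k * ((m-i).choose k : ℝ)) := by
      intro k hk
      simp only [Finset.mem_range] at hk
      have hk' : k ≤ n - i := by omega
      rw [poch_neg_nat]
      have hd1 : m.descFactorial (i+k) = m.descFactorial i * (m-i).descFactorial k :=
        (desc_mul m i k).symm
      have hd2 : (m-i).descFactorial k = k.factorial * ((m-i).choose k) :=
        Nat.descFactorial_eq_factorial_mul_choose _ _
      have hd3 : n - (i+k) = (n-i) - k := by omega
      have hd4 : (n-i).descFactorial ((n-i)-k) * k.factorial = (n-i).factorial := by
        have h5 := desc_mul (n-i) ((n-i)-k) k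
        have h6 : (n-i) - ((n-i)-k) = k := by omega
        rw [h6] at h5
        have h7 : (n-i) - k + k = n - i := by omega
        rw [h7] at h5
        rw [← Nat.descFactorial_self (n-i), ← h5]
        congr 1
        exact (Nat.descFactorial_self k).symm
      have hcast : (((n-i).descFactorial ((n-i)-k) : ℕ) : ℝ) * (k.factorial : ℝ)
          = ((n-i).factorial : ℝ) := by exact_mod_cast congrArg (Nat.cast (R := ℝ)) hd4
      rw [hd3, hd1, hd2]
      push_cast
      have hkf : (k.factorial : ℝ) ≠ 0 := by positivity
      field_simp at hcast ⊢
      rw [pow_add]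
      linear_combination ((-1:ℝ)^i * (-1:ℝ)^k * (m.descFactorial i : ℝ) * ((m-i).choose k : ℝ)) * hcast
    rw [Finset.sum_congr rfl hterm, ← Finset.mul_sum]
    rw [alt_sum_choose (by omega : m - i ≤ n - i)]
    rcases eq_or_ne i m with he | hne
    · subst he
      rw [if_pos (by omega), if_pos rfl, Nat.descFactorial_self]
      ring
    · rw [if_neg (by omega), if_neg hne]
      ring
end core

section main
variable {α : ℝ} {n : ℕ}

lemma poch_negnα_ne_zero (hα : α > -1) {l : ℕ} (hl : l ≤ n) :
    poch (-(n:ℝ) - α) l ≠ 0 := by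
  rw [poch]
  apply Finset.prod_ne_zero_iff.2
  intro t ht
  simp only [Finset.mem_range] at ht
  have h1 : (t:ℝ) ≤ (n:ℝ) - 1 := by
    have : t + 1 ≤ n := by omega
    have := (Nat.cast_le (α := ℝ)).2 this
    push_cast at this
    linarith
  intro hcon
  have : -(n:ℝ) - α + t < 0 := by linarith
  linarith [hcon ▸ this]

lemma inner_cv (hα : α > -1) (b : ℝ) {l : ℕ} (hl : l ≤ n) :
    ∑ j ∈ Finset.range (n+1),
        poch (-(((n-l:ℕ)):ℝ)) j * poch b j / ((Nat.factorial j : ℝ) * poch (α+1) j)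
      = poch ((α+1)-b) (n-l) / poch (α+1) (n-l) := by
  rw [← cv_div (by linarith : (0:ℝ) < α+1) b (n-l)]
  symm
  apply Finset.sum_subset (Finset.range_subset_range.2 (by omega))
  intro j hj1 hj2
  simp only [Finset.mem_range] at hj1 hj2
  rw [poch_neg_nat_eq_zero (by omega : n - l < j)]
  simp

lemma S_sum (hα : α > -1) {i m : ℕ} (hi : i ≤ n) (hm : m ≤ n) :
    ∑ j ∈ Finset.range (n+1),
        (poch (-(n:ℝ)) j * poch (α + ((n-i:ℕ):ℝ) + 1) j
          / ((Nat.factorial j : ℝ) * poch (α+1) j)) * hyperF α n m j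
      = (if i = m then ((-1:ℝ)^(n+i) * (Nat.factorial i : ℝ) * (Nat.factorial (n-i) : ℝ)) else 0)
          / poch (α+1) n := by
  set b : ℝ := α + ((n-i:ℕ):ℝ) + 1 with hb
  have hstep1 : ∀ j ∈ Finset.range (n+1),
      (poch (-(n:ℝ)) j * poch b j / ((Nat.factorial j : ℝ) * poch (α+1) j)) * hyperF α n m j
      = ∑ l ∈ Finset.range (n+1),
          ((-1:ℝ)^l * (n.descFactorial l : ℝ) * poch (-(m:ℝ)) l
              / (poch (-(n:ℝ)) l * poch (-(n:ℝ) - α) l))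
            * (poch (-(((n-l:ℕ)):ℝ)) j * poch b j / ((Nat.factorial j : ℝ) * poch (α+1) j)) := by
    intro j hj
    simp only [Finset.mem_range] at hj
    have hj' : j ≤ n := by omega
    rw [hyperF_ext α hm hj', Finset.mul_sum]
    apply Finset.sum_congr rfl
    intro l hl
    simp only [Finset.mem_range] at hl
    have hl' : l ≤ n := by omega
    have e := key_swap (n := n) hj' hl'
    calc (poch (-(n:ℝ)) j * poch b j / ((Nat.factorial j : ℝ) * poch (α+1) j))
            * (poch ((j:ℝ) - n) l * poch (-(m:ℝ)) l / (poch (-(n:ℝ)) l * poch (-(n:ℝ) - α) l))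
        = (poch (-(n:ℝ)) j * poch ((j:ℝ) - n) l) * (poch b j * poch (-(m:ℝ)) l)
            / (((Nat.factorial j : ℝ) * poch (α+1) j) * (poch (-(n:ℝ)) l * poch (-(n:ℝ) - α) l)) := by
          ring
      _ = ((-1:ℝ)^l * (n.descFactorial l : ℝ) * poch (-(((n-l:ℕ)):ℝ)) j)
            * (poch b j * poch (-(m:ℝ)) l)
            / (((Nat.factorial j : ℝ) * poch (α+1) j) * (poch (-(n:ℝ)) l * poch (-(n:ℝ) - α) l)) := by
          rw [e]
      _ = _ := by ring
  rw [Finset.sum_congr rfl hstep1, Finset.sum_comm]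
  have hstep2 : ∀ l ∈ Finset.range (n+1),
      ∑ j ∈ Finset.range (n+1),
          ((-1:ℝ)^l * (n.descFactorial l : ℝ) * poch (-(m:ℝ)) l
              / (poch (-(n:ℝ)) l * poch (-(n:ℝ) - α) l))
            * (poch (-(((n-l:ℕ)):ℝ)) j * poch b j / ((Nat.factorial j : ℝ) * poch (α+1) j))
      = ((-1:ℝ)^n * poch (-(m:ℝ)) l * (((n-i).descFactorial (n-l) : ℕ) : ℝ)) / poch (α+1) n := by
    intro l hl
    simp only [Finset.mem_range] at hl
    have hl' : l ≤ n := by omega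
    rw [← Finset.mul_sum, inner_cv hα b hl']
    have hbase : (α+1) - b = -(((n-i:ℕ)):ℝ) := by rw [hb]; ring
    rw [poch_base_congr hbase, poch_neg_nat (n-i) (n-l)]
    have hD : poch (-(n:ℝ) - α) l * poch (α+1) (n-l) = (-1)^l * poch (α+1) n := by
      rw [poch_reflect (-(n:ℝ)-α) l]
      have hbb : 1 - (-(n:ℝ)-α) - l = (α+1) + ((n-l:ℕ):ℝ) := by push_cast [hl']; ring
      rw [poch_base_congr hbb]
      have h8 : poch (α+1) n = poch (α+1) ((n-l) + l) := by congr 1; omega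
      rw [h8, poch_add]
      ring
    have hnz1 : poch (-(n:ℝ)) l ≠ 0 := poch_neg_nat_ne_zero hl'
    have hnz2 : poch (-(n:ℝ) - α) l ≠ 0 := poch_negnα_ne_zero hα hl'
    have hnz3 : poch (α+1) (n-l) ≠ 0 := (poch_pos (by linarith) _).ne'
    have hnz4 : poch (α+1) n ≠ 0 := (poch_pos (by linarith) _).ne'
    have hpn : poch (-(n:ℝ)) l = (-1)^l * (n.descFactorial l : ℝ) := poch_neg_nat n l
    have hsgn : ((-1:ℝ)^(n-l)) * ((-1:ℝ)^l) = (-1:ℝ)^n := by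
      rw [← pow_add]
      congr 1
      omega
    have hnd : ((-1:ℝ)^l * (n.descFactorial l : ℝ)) ≠ 0 := by
      rw [← hpn]; exact hnz1
    rw [hpn]
    have hndl0 : ((n.descFactorial l : ℕ) : ℝ) ≠ 0 := by
      have : n.descFactorial l ≠ 0 := by
        simp [Nat.descFactorial_eq_zero_iff_lt]; omega
      exact_mod_cast this
    have hcancel : (-1:ℝ)^l * (n.descFactorial l : ℝ) * poch (-(m:ℝ)) l
        / ((-1:ℝ)^l * (n.descFactorial l : ℝ) * poch (-(n:ℝ) - α) l)
        = poch (-(m:ℝ)) l / poch (-(n:ℝ) - α) l := by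
      rw [mul_assoc, mul_assoc, mul_div_mul_left _ _ (by simp : ((-1:ℝ)^l) ≠ 0),
        mul_div_mul_left _ _ hndl0]
    rw [hcancel]
    rw [div_mul_div_comm, hD]
    have hne1 : ((-1:ℝ)^l * poch (α+1) n) ≠ 0 := by
      apply mul_ne_zero _ hnz4
      simp
    rw [div_eq_div_iff hne1 hnz4]
    rw [← hsgn]
    ring_nf
    rw [mul_comm l 2, pow_mul]
    norm_num
  rw [Finset.sum_congr rfl hstep2]
  have : ∀ l ∈ Finset.range (n+1),
      ((-1:ℝ)^n * poch (-(m:ℝ)) l * (((n-i).descFactorial (n-l) : ℕ) : ℝ)) / poch (α+1) n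
      = ((-1:ℝ)^n * (poch (-(m:ℝ)) l * (((n-i).descFactorial (n-l) : ℕ) : ℝ))) / poch (α+1) n := by
    intro l _; ring
  rw [Finset.sum_congr rfl this, ← Finset.sum_div, ← Finset.mul_sum, T_sum hi hm]
  rcases eq_or_ne i m with he | hne
  · rw [if_pos he, if_pos he]
    congr 1
    rw [pow_add]
    ring
  · rw [if_neg hne, if_neg hne]
    simp

noncomputable def Acoef (n : ℕ) (α β : ℝ) (m : ℕ) : ℝ :=
  ((-1)^(n-m) * ((n:ℝ)+1) * poch (α+β+2) n /
      ((Real.Gamma (α+1) * Real.Gamma (β+1) / Real.Gamma (α+β+2)) * poch (α+1) (n-m) * poch (β+1) m)) *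
    (poch (α+1) n / (Nat.factorial (n+1) : ℝ))

noncomputable def Bc (n : ℕ) (α β : ℝ) (j : ℕ) : ℝ :=
  poch (-(n:ℝ)) j * poch ((n:ℝ)+α+β+2) j / ((Nat.factorial j : ℝ) * poch (α+1) j)

noncomputable def Epoly (n : ℕ) (α β : ℝ) (m : ℕ) : Polynomial ℝ :=
  Polynomial.C (Acoef n α β m) * ∑ j ∈ Finset.range (n+1),
    Polynomial.C (Bc n α β j * hyperF α n m j) * (1 - Polynomial.X)^j

lemma Epoly_eval (n : ℕ) (α β : ℝ) (m : ℕ) (x : ℝ) :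
    (Epoly n α β m).eval x
      = Acoef n α β m * ∑ j ∈ Finset.range (n+1),
          Bc n α β j * hyperF α n m j * (1-x)^j := by
  simp [Epoly, Polynomial.eval_finset_sum]

lemma Epoly_natDegree_le (n : ℕ) (α β : ℝ) (m : ℕ) : (Epoly n α β m).natDegree ≤ n := by
  apply le_trans (Polynomial.natDegree_mul_le)
  simp only [Polynomial.natDegree_C, zero_add]
  apply le_trans (Polynomial.natDegree_sum_le _ _)
  apply (Finset.fold_max_le n).2
  constructor
  · exact Nat.zero_le n
  · intro j hj
    simp only [Finset.mem_range, Function.comp] at hj ⊢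
    apply le_trans (Polynomial.natDegree_mul_le)
    simp only [Polynomial.natDegree_C, zero_add]
    apply le_trans (Polynomial.natDegree_pow_le)
    have h1 : (1 - Polynomial.X : Polynomial ℝ).natDegree ≤ 1 := by
      apply le_trans (Polynomial.natDegree_sub_le _ _)
      simp
    calc j * (1 - Polynomial.X : Polynomial ℝ).natDegree ≤ j * 1 := by
          exact Nat.mul_le_mul_left j h1
      _ ≤ n := by omega

lemma bern_continuous (n i : ℕ) : Continuous (fun x : ℝ => bern n i x) := by
  unfold bern; fun_prop

lemma Epoly_ortho {α β : ℝ} (hα : α > -1) (hβ : β > -1) {n i m : ℕ} (hi : i ≤ n) (hm : m ≤ n) :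
    (∫ x in (0:ℝ)..1, (1-x)^α * x^β * bern n i x * (Epoly n α β m).eval x)
      = if i = m then (1:ℝ) else 0 := by
  classical
  -- Step 1: rewrite the integrand as a finite sum
  have hpt : ∀ x : ℝ, (1-x)^α * x^β * bern n i x * (Epoly n α β m).eval x
      = ∑ j ∈ Finset.range (n+1),
          (Acoef n α β m * (Bc n α β j * hyperF α n m j))
            * ((1-x)^α * x^β * (bern n i x * (1-x)^j)) := by
    intro x
    rw [Epoly_eval, Finset.mul_sum, Finset.mul_sum]
    apply Finset.sum_congr rfl
    intro j _
    ring
  have hint : ∀ j : ℕ, IntervalIntegrable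
      (fun x : ℝ => (1-x)^α * x^β * (bern n i x * (1-x)^j)) volume 0 1 := by
    intro j
    apply intWg hα hβ
    apply Continuous.continuousOn
    have := bern_continuous n i
    fun_prop
  have hsplit : (∫ x in (0:ℝ)..1, (1-x)^α * x^β * bern n i x * (Epoly n α β m).eval x)
      = ∑ j ∈ Finset.range (n+1),
          (Acoef n α β m * (Bc n α β j * hyperF α n m j))
            * ∫ x in (0:ℝ)..1, (1-x)^α * x^β * (bern n i x * (1-x)^j) := by
    rw [intervalIntegral.integral_congr (g := fun x => ∑ j ∈ Finset.range (n+1),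
          (Acoef n α β m * (Bc n α β j * hyperF α n m j))
            * ((1-x)^α * x^β * (bern n i x * (1-x)^j))) (fun x _ => hpt x)]
    rw [intervalIntegral.integral_finset_sum]
    · apply Finset.sum_congr rfl
      intro j _
      rw [intervalIntegral.integral_const_mul]
    · intro j _
      exact (hint j).const_mul _
  rw [hsplit]
  -- Step 2: evaluate each integral
  have hval : ∀ j : ℕ, (∫ x in (0:ℝ)..1, (1-x)^α * x^β * (bern n i x * (1-x)^j))
      = (n.choose i : ℝ) * (Real.Gamma (β+i+1) * Real.Gamma (α+(n-i:ℕ)+j+1)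
          / Real.Gamma ((β+i+1) + (α+(n-i:ℕ)+j+1))) := by
    intro j
    rw [← coreInt hα hβ hi j]
    apply intervalIntegral.integral_congr
    intro x _
    ring
  simp only [hval]
  -- Step 3: Gamma factorizations
  set bα : ℝ := α + ((n-i:ℕ):ℝ) + 1 with hbα
  set c0 : ℝ := α + β + (n:ℝ) + 2 with hc0
  have hbα_pos : 0 < bα := by
    have : (0:ℝ) ≤ ((n-i:ℕ):ℝ) := Nat.cast_nonneg _
    rw [hbα]; linarith
  have hc0_pos : 0 < c0 := by
    have : (0:ℝ) ≤ (n:ℝ) := Nat.cast_nonneg _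
    rw [hc0]; linarith
  have hGa : ∀ j : ℕ, Real.Gamma (α+((n-i:ℕ):ℝ)+j+1) = Real.Gamma bα * poch bα j := by
    intro j
    rw [← Gamma_add_nat hbα_pos j]
    congr 1
    rw [hbα]; ring
  have hGc : ∀ j : ℕ, Real.Gamma ((β+i+1) + (α+((n-i:ℕ):ℝ)+j+1)) = Real.Gamma c0 * poch c0 j := by
    intro j
    rw [← Gamma_add_nat hc0_pos j]
    congr 1
    have hcast : ((i:ℕ):ℝ) + ((n-i:ℕ):ℝ) = (n:ℝ) := by push_cast [hi]; ring
    rw [hc0]; linarith [hcast]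
  have hterm : ∀ j ∈ Finset.range (n+1),
      (Acoef n α β m * (Bc n α β j * hyperF α n m j))
        * ((n.choose i : ℝ) * (Real.Gamma (β+i+1) * Real.Gamma (α+(n-i:ℕ)+j+1)
            / Real.Gamma ((β+i+1) + (α+(n-i:ℕ)+j+1))))
      = (Acoef n α β m * (n.choose i : ℝ) * Real.Gamma (β+i+1) * Real.Gamma bα / Real.Gamma c0)
          * ((poch (-(n:ℝ)) j * poch bα j / ((Nat.factorial j : ℝ) * poch (α+1) j))
              * hyperF α n m j) := by
    intro j _
    rw [hGa j, hGc j, Bc]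
    have hpc : poch ((n:ℝ)+α+β+2) j = poch c0 j := poch_base_congr (by rw [hc0]; ring) j
    rw [hpc]
    have h1 : poch c0 j ≠ 0 := (poch_pos hc0_pos j).ne'
    have h2 : (Nat.factorial j : ℝ) ≠ 0 := by positivity
    have h3 : poch (α+1) j ≠ 0 := (poch_pos (by linarith) j).ne'
    have h4 : Real.Gamma c0 ≠ 0 := (Real.Gamma_pos_of_pos hc0_pos).ne'
    field_simp
  rw [Finset.sum_congr rfl hterm, ← Finset.mul_sum, S_sum hα hi hm]
  -- Step 4: final constant evaluation
  rcases eq_or_ne i m with he | hne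
  · subst he
    rw [if_pos rfl, if_pos rfl]
    have e1 : Real.Gamma (β+i+1) = Real.Gamma (β+1) * poch (β+1) i := by
      rw [← Gamma_add_nat (by linarith : (0:ℝ) < β+1) i]
      congr 1; ring
    have e2 : Real.Gamma bα = Real.Gamma (α+1) * poch (α+1) (n-i) := by
      rw [← Gamma_add_nat (by linarith : (0:ℝ) < α+1) (n-i)]
      congr 1; rw [hbα]; ring
    have e3 : Real.Gamma c0 = Real.Gamma (α+β+2) * poch (α+β+2) n := by
      rw [← Gamma_add_nat (by linarith : (0:ℝ) < α+β+2) n]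
      congr 1; rw [hc0]; ring
    rw [e1, e2, e3, Acoef]
    have hcf : ((n.choose i : ℕ) : ℝ) * (Nat.factorial i : ℝ) * (Nat.factorial (n-i) : ℝ)
        = (Nat.factorial n : ℝ) := by
      exact_mod_cast congrArg (Nat.cast (R := ℝ)) (Nat.choose_mul_factorial_mul_factorial hi)
    have hsgn : (-1:ℝ)^(n-i) * (-1:ℝ)^(n+i) = 1 := by
      rw [← pow_add]
      have : (n-i) + (n+i) = 2*n := by omega
      rw [this, pow_mul]
      norm_num
    have hfac : ((Nat.factorial (n+1) : ℕ) : ℝ) = ((n:ℝ)+1) * (Nat.factorial n : ℝ) := by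
      rw [Nat.factorial_succ]; push_cast; ring
    have n1 : Real.Gamma (α+1) ≠ 0 := (Real.Gamma_pos_of_pos (by linarith)).ne'
    have n2 : Real.Gamma (β+1) ≠ 0 := (Real.Gamma_pos_of_pos (by linarith)).ne'
    have n3 : Real.Gamma (α+β+2) ≠ 0 := (Real.Gamma_pos_of_pos (by linarith)).ne'
    have n4 : poch (α+1) (n-i) ≠ 0 := (poch_pos (by linarith) _).ne'
    have n5 : poch (β+1) i ≠ 0 := (poch_pos (by linarith) _).ne'
    have n6 : poch (α+β+2) n ≠ 0 := (poch_pos (by linarith) _).ne'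
    have n7 : poch (α+1) n ≠ 0 := (poch_pos (by linarith) _).ne'
    have n8 : ((Nat.factorial (n+1) : ℕ) : ℝ) ≠ 0 := by positivity
    have n9 : ((n:ℝ)+1) ≠ 0 := by positivity
    have n10 : (Nat.factorial n : ℝ) ≠ 0 := by positivity
    field_simp
    rw [hfac]
    have key : ((n.choose i : ℕ) : ℝ) * (Nat.factorial i : ℝ) * (Nat.factorial (n-i) : ℝ)
        * ((-1:ℝ)^(n-i) * ((-1:ℝ)^n * (-1:ℝ)^i)) = (Nat.factorial n : ℝ) := by
      rw [hcf, ← pow_add, hsgn, mul_one]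
    linear_combination ((n:ℝ) + 1) * key
  · rw [if_neg hne, if_neg hne]
    simp

theorem dual_unique {α β : ℝ} (hα : α > -1) (hβ : β > -1) {n : ℕ} {D : ℕ → Polynomial ℝ}
    (hD : IsDualBernstein n α β D) {i : ℕ} (hi : i ≤ n) : D i = Epoly n α β i := by
  classical
  set q : Polynomial ℝ := D i - Epoly n α β i with hq
  have hqdeg : q.natDegree ≤ n :=
    le_trans (Polynomial.natDegree_sub_le _ _) (max_le (hD.1 i hi) (Epoly_natDegree_le n α β i))
  have hqcont : Continuous (fun x : ℝ => q.eval x) := q.continuous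
  -- orthogonality to all Bernstein polynomials
  have horth : ∀ k, k ≤ n →
      (∫ x in (0:ℝ)..1, (1-x)^α * x^β * (bern n k x * q.eval x)) = 0 := by
    intro k hk
    have hint1 : IntervalIntegrable
        (fun x : ℝ => (1-x)^α * x^β * (bern n k x * (D i).eval x)) volume 0 1 := by
      apply intWg hα hβ
      exact (((bern_continuous n k).mul (D i).continuous)).continuousOn
    have hint2 : IntervalIntegrable
        (fun x : ℝ => (1-x)^α * x^β * (bern n k x * (Epoly n α β i).eval x)) volume 0 1 := by
      apply intWg hα hβ
      exact (((bern_continuous n k).mul (Epoly n α β i).continuous)).continuousOn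
    have hsplit : (∫ x in (0:ℝ)..1, (1-x)^α * x^β * (bern n k x * q.eval x))
        = (∫ x in (0:ℝ)..1, (1-x)^α * x^β * (bern n k x * (D i).eval x))
          - ∫ x in (0:ℝ)..1, (1-x)^α * x^β * (bern n k x * (Epoly n α β i).eval x) := by
      rw [← intervalIntegral.integral_sub hint1 hint2]
      apply intervalIntegral.integral_congr
      intro x _
      simp only [hq, Polynomial.eval_sub]
      ring
    have h1 : (∫ x in (0:ℝ)..1, (1-x)^α * x^β * (bern n k x * (D i).eval x))
        = if k = i then (1:ℝ) else 0 := by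
      rw [← hD.2 k hk i hi]
      apply intervalIntegral.integral_congr
      intro x _
      ring
    have h2 : (∫ x in (0:ℝ)..1, (1-x)^α * x^β * (bern n k x * (Epoly n α β i).eval x))
        = if k = i then (1:ℝ) else 0 := by
      rw [← Epoly_ortho hα hβ hk hi]
      apply intervalIntegral.integral_congr
      intro x _
      ring
    rw [hsplit, h1, h2, sub_self]
  -- orthogonality to monomial basis x^r (1-x)^(n-r)
  have hmono : ∀ r, r ≤ n →
      (∫ x in (0:ℝ)..1, (1-x)^α * x^β * (x^r * (1-x)^(n-r) * q.eval x)) = 0 := by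
    intro r hr
    have hC : ((n.choose r : ℕ) : ℝ) ≠ 0 := by
      have := Nat.choose_pos hr
      positivity
    have h3 : (∫ x in (0:ℝ)..1, (1-x)^α * x^β * (bern n r x * q.eval x))
        = (n.choose r : ℝ) * ∫ x in (0:ℝ)..1, (1-x)^α * x^β * (x^r * (1-x)^(n-r) * q.eval x) := by
      rw [← intervalIntegral.integral_const_mul]
      apply intervalIntegral.integral_congr
      intro x _
      simp only [bern]
      ring
    have h4 := horth r hr
    rw [h3] at h4
    exact (mul_eq_zero.1 h4).resolve_left hC
  -- square integral vanishes
  have hsq : (∫ x in (0:ℝ)..1, (1-x)^α * x^β * (q.eval x * q.eval x)) = 0 := by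
    have heval : ∀ x : ℝ, q.eval x = ∑ m ∈ Finset.range (n+1), q.coeff m * x^m := by
      intro x
      exact Polynomial.eval_eq_sum_range' (by omega) x
    -- expand first factor
    have hpt : ∀ x : ℝ, (1-x)^α * x^β * (q.eval x * q.eval x)
        = ∑ m ∈ Finset.range (n+1), q.coeff m * ((1-x)^α * x^β * (x^m * q.eval x)) := by
      intro x
      rw [show q.eval x * q.eval x
          = (∑ m ∈ Finset.range (n+1), q.coeff m * x^m) * q.eval x from by rw [← heval x]]
      rw [Finset.sum_mul, Finset.mul_sum]
      apply Finset.sum_congr rfl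
      intro m _
      ring
    have hint : ∀ m : ℕ, IntervalIntegrable
        (fun x : ℝ => (1-x)^α * x^β * (x^m * q.eval x)) volume 0 1 := by
      intro m
      apply intWg hα hβ
      exact ((continuous_pow m).mul hqcont).continuousOn
    have hsplit : (∫ x in (0:ℝ)..1, (1-x)^α * x^β * (q.eval x * q.eval x))
        = ∑ m ∈ Finset.range (n+1), q.coeff m
            * ∫ x in (0:ℝ)..1, (1-x)^α * x^β * (x^m * q.eval x) := by
      rw [intervalIntegral.integral_congr (g := fun x => ∑ m ∈ Finset.range (n+1),
            q.coeff m * ((1-x)^α * x^β * (x^m * q.eval x))) (fun x _ => hpt x)]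
      rw [intervalIntegral.integral_finset_sum]
      · apply Finset.sum_congr rfl
        intro m _
        rw [intervalIntegral.integral_const_mul]
      · intro m _
        exact (hint m).const_mul _
    rw [hsplit]
    apply Finset.sum_eq_zero
    intro m hm
    simp only [Finset.mem_range] at hm
    have hm' : m ≤ n := by omega
    -- x^m = sum of Bernstein-type monomials
    have hxm : ∀ x : ℝ, (x:ℝ)^m = ∑ k ∈ Finset.range ((n-m)+1),
        (((n-m).choose k : ℕ) : ℝ) * (x^(m+k) * (1-x)^(n-(m+k))) := by
      intro x
      have hb := add_pow x (1-x) (n-m)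
      simp only [add_sub_cancel] at hb
      have hb' : (1:ℝ) = (x + (1-x))^(n-m) := by norm_num
      calc (x:ℝ)^m = x^m * (x + (1-x))^(n-m) := by rw [← hb']; ring
        _ = x^m * ∑ k ∈ Finset.range ((n-m)+1), x^k * (1-x)^((n-m)-k) * ((n-m).choose k : ℝ) := by
            rw [add_pow]
        _ = ∑ k ∈ Finset.range ((n-m)+1),
              (((n-m).choose k : ℕ) : ℝ) * (x^(m+k) * (1-x)^(n-(m+k))) := by
            rw [Finset.mul_sum]
            apply Finset.sum_congr rfl
            intro k hk
            simp only [Finset.mem_range] at hk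
            have : (n-m)-k = n-(m+k) := by omega
            rw [← this, pow_add]
            ring
    have hinner : (∫ x in (0:ℝ)..1, (1-x)^α * x^β * (x^m * q.eval x)) = 0 := by
      have hpt2 : ∀ x : ℝ, (1-x)^α * x^β * (x^m * q.eval x)
          = ∑ k ∈ Finset.range ((n-m)+1), (((n-m).choose k : ℕ) : ℝ)
              * ((1-x)^α * x^β * (x^(m+k) * (1-x)^(n-(m+k)) * q.eval x)) := by
        intro x
        conv_lhs => rw [hxm x]
        rw [Finset.sum_mul, Finset.mul_sum]
        apply Finset.sum_congr rfl
        intro k _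
        ring
      have hint2 : ∀ k : ℕ, IntervalIntegrable
          (fun x : ℝ => (1-x)^α * x^β * (x^(m+k) * (1-x)^(n-(m+k)) * q.eval x)) volume 0 1 := by
        intro k
        apply intWg hα hβ
        apply Continuous.continuousOn
        fun_prop
      rw [intervalIntegral.integral_congr (g := fun x => ∑ k ∈ Finset.range ((n-m)+1),
            (((n-m).choose k : ℕ) : ℝ)
              * ((1-x)^α * x^β * (x^(m+k) * (1-x)^(n-(m+k)) * q.eval x))) (fun x _ => hpt2 x)]
      rw [intervalIntegral.integral_finset_sum]
      · apply Finset.sum_eq_zero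
        intro k hk
        simp only [Finset.mem_range] at hk
        rw [intervalIntegral.integral_const_mul, hmono (m+k) (by omega), mul_zero]
      · intro k _
        exact (hint2 k).const_mul _
    rw [hinner, mul_zero]
  -- conclude q = 0
  have hq0 : q = 0 := by
    by_contra hne
    set g : ℝ → ℝ := fun x => (1-x)^α * x^β * (q.eval x * q.eval x) with hg
    have hgint : IntegrableOn g (Set.Ioc (0:ℝ) 1) volume := by
      have := intWg hα hβ (g := fun x => q.eval x * q.eval x)
        ((hqcont.mul hqcont).continuousOn)
      rw [intervalIntegrable_iff, Set.uIoc_of_le (by norm_num : (0:ℝ) ≤ 1)] at this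
      exact this
    have hIoc : (∫ x in Set.Ioc (0:ℝ) 1, g x) = 0 := by
      rw [← intervalIntegral.integral_of_le (by norm_num : (0:ℝ) ≤ 1)]
      exact hsq
    have hnn : 0 ≤ᵐ[volume.restrict (Set.Ioc (0:ℝ) 1)] g := by
      filter_upwards [MeasureTheory.ae_restrict_mem measurableSet_Ioc] with x hx
      simp only [Pi.zero_apply]
      have h1 : (0:ℝ) ≤ (1-x)^α := Real.rpow_nonneg (by linarith [hx.2]) α
      have h2 : (0:ℝ) ≤ x^β := Real.rpow_nonneg (le_of_lt hx.1) β
      have h3 : (0:ℝ) ≤ q.eval x * q.eval x := mul_self_nonneg _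
      positivity
    have hzero := (MeasureTheory.integral_eq_zero_iff_of_nonneg_ae hnn hgint).1 hIoc
    have hae : ∀ᵐ x ∂(volume : Measure ℝ), x ∈ Set.Ioc (0:ℝ) 1 → g x = 0 := by
      rw [← MeasureTheory.ae_restrict_iff' measurableSet_Ioc]
      exact hzero
    rw [MeasureTheory.ae_iff] at hae
    have hroots : {x : ℝ | q.IsRoot x}.Finite := Polynomial.finite_setOf_isRoot hne
    have hsubset : Set.Ioo (0:ℝ) 1 ⊆
        {x : ℝ | ¬ (x ∈ Set.Ioc (0:ℝ) 1 → g x = 0)} ∪ {x : ℝ | q.IsRoot x} := by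
      intro x hx
      rcases eq_or_ne (g x) 0 with hgx | hgx
      · right
        have h1 : (0:ℝ) < (1-x)^α := Real.rpow_pos_of_pos (by linarith [hx.2]) α
        have h2 : (0:ℝ) < x^β := Real.rpow_pos_of_pos hx.1 β
        have h3 : q.eval x * q.eval x = 0 := by
          by_contra hcc
          have : g x ≠ 0 := by
            rw [hg]
            simp only
            exact mul_ne_zero (mul_ne_zero h1.ne' h2.ne') hcc
          exact this hgx
        have := mul_self_eq_zero.1 h3
        exact this
      · left
        intro hcontra
        exact hgx (hcontra ⟨hx.1, le_of_lt hx.2⟩)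
    have hle := measure_mono hsubset (μ := (volume : Measure ℝ))
    have hroots0 : (volume : Measure ℝ) {x : ℝ | q.IsRoot x} = 0 :=
      hroots.measure_zero _
    have hunion : (volume : Measure ℝ)
        ({x : ℝ | ¬ (x ∈ Set.Ioc (0:ℝ) 1 → g x = 0)} ∪ {x : ℝ | q.IsRoot x}) = 0 := by
      apply le_antisymm _ (zero_le)
      calc _ ≤ (volume : Measure ℝ) {x : ℝ | ¬ (x ∈ Set.Ioc (0:ℝ) 1 → g x = 0)}
            + (volume : Measure ℝ) {x : ℝ | q.IsRoot x} := measure_union_le _ _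
        _ = 0 := by rw [hae, hroots0, add_zero]
    rw [hunion] at hle
    have : (volume : Measure ℝ) (Set.Ioo (0:ℝ) 1) = 1 := by
      rw [Real.volume_Ioo]
      norm_num
    rw [this] at hle
    simp at hle
  have : D i = Epoly n α β i := by
    have := sub_eq_zero.1 hq0
    exact this
  exact this


/-- Power-basis representation of dual Bernstein polynomials. -/
theorem dualBernstein_power_repr (n : ℕ) (α β : ℝ) (hα : α > -1) (hβ : β > -1)
    (D : ℕ → Polynomial ℝ) (hD : IsDualBernstein n α β D)
    (i : ℕ) (hi : i ≤ n) (x : ℝ) :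
    (D i).eval x
      = ((-1)^(n-i) * ((n:ℝ)+1) * poch (α+β+2) n /
      ((Real.Gamma (α+1) * Real.Gamma (β+1) / Real.Gamma (α+β+2)) * poch (α+1) (n-i) * poch (β+1) i)) *
        (poch (α+1) n / (Nat.factorial (n+1) : ℝ)) *
        ∑ j ∈ Finset.range (n+1),
          (poch (-(n:ℝ)) j * poch ((n:ℝ)+α+β+2) j /
            ((Nat.factorial j : ℝ) * poch (α+1) j)) *
          hyperF α n i j * (1-x)^j := by
  rw [dual_unique hα hβ hD hi, Epoly_eval]
  simp only [Acoef, Bc]
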